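/- arXiv:1202.0920 — 4 statements merged into one kernel-verified Lean document; each statement's English description precedes it below -/
import Mathlib

section
/- For a collection of m coupons where coupon i is drawn independently with probability p_i > 0 at each trial (with p_1 + ... + p_m = 1), the expected number of trials needed to obtain at least one copy of every coupon equals the integral from 0 to infinity of (1 - ∏_{i=1}^m (1 - e^{-p_i t})) dt. -/
open MeasureTheory ProbabilityTheory Filter

lemma aux_prod_one_sub {ι : Type*} [DecidableEq ι] {R : Type*} [CommRing R] (s : Finset ι) (x : ι → R) :
    ∏ i ∈ s, (1 - x i) = ∑ t ∈ s.powerset, (-1)^t.card * ∏ i ∈ t, x i := by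
  have h := Finset.prod_add (fun i => -x i) (fun _ => (1:R)) s
  simp only [Finset.prod_const_one, mul_one] at h
  calc ∏ i ∈ s, (1 - x i) = ∏ i ∈ s, (-x i + 1) := by
        refine Finset.prod_congr rfl fun i _ => by ring
    _ = ∑ t ∈ s.powerset, ∏ i ∈ t, -x i := h
    _ = ∑ t ∈ s.powerset, (-1)^t.card * ∏ i ∈ t, x i := by
        refine Finset.sum_congr rfl fun t _ => ?_
        rw [show (fun i => -x i) = fun i => (-1) * x i from funext fun i => by ring,
          Finset.prod_mul_distrib, Finset.prod_const]

lemma aux_integral_exp (b : ℝ) (hb : 0 < b) :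
    ∫ x in Set.Ioi (0:ℝ), Real.exp (-b * x) = b⁻¹ := by
  have := integral_comp_mul_left_Ioi (fun x => Real.exp (-x)) 0 hb
  simp only [mul_zero, neg_mul] at this ⊢
  rw [show (fun x => Real.exp (-(b*x))) = fun x => (fun y => Real.exp (-y)) (b*x) from rfl]
  rw [this, integral_exp_neg_Ioi_zero, smul_eq_mul, mul_one]

lemma aux_tsum_lt (t : ℕ) : ∑' n : ℕ, (if n < t then (1:ENNReal) else 0) = t := by
  rw [tsum_eq_sum (s := Finset.range t) (fun n hn => by simp [Finset.mem_range] at hn; simp [hn])]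
  rw [Finset.sum_ite_of_true (fun n hn => Finset.mem_range.mp hn)]
  simp

set_option maxHeartbeats 1000000 in
/-- Flajolet–Gardy–Thimonier integral representation of the coupon collector
expected waiting time. -/
theorem couponCollector_integral_formula
    {Ω : Type*} [MeasurableSpace Ω] (μ : Measure Ω) [IsProbabilityMeasure μ]
    (m : ℕ) (hm : 0 < m) (p : Fin m → ℝ) (hp : ∀ i, 0 < p i)
    (hsum : ∑ i, p i = 1)
    (X : ℕ → Ω → Fin m) (hmeas : ∀ n, Measurable (X n))
    (hindep : iIndepFun X μ)
    (hdist : ∀ n i, μ {ω | X n ω = i} = ENNReal.ofReal (p i))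
    (T : Ω → ℕ)
    (hT : ∀ ω, T ω = sInf {n : ℕ | ∀ i : Fin m, ∃ k < n, X k ω = i}) :
    ∫ ω, (T ω : ℝ) ∂μ
      = ∫ t in Set.Ioi (0 : ℝ), (1 - ∏ i, (1 - Real.exp (-(p i) * t))) := by
  classical
  -- notation
  set P : Finset (Finset (Fin m)) := (Finset.univ : Finset (Fin m)).powerset.erase ∅ with hP
  set q : Finset (Fin m) → ℝ := fun S => ∑ i ∈ S, p i with hqdef
  have hq_nonneg : ∀ S : Finset (Fin m), 0 ≤ q S :=
    fun S => Finset.sum_nonneg fun i _ => (hp i).le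
  have hq_le : ∀ S : Finset (Fin m), q S ≤ 1 := by
    intro S
    rw [← hsum]
    exact Finset.sum_le_sum_of_subset_of_nonneg (Finset.subset_univ S) fun i _ _ => (hp i).le
  have hq_pos : ∀ S ∈ P, 0 < q S := by
    intro S hS
    obtain ⟨i, hi⟩ := Finset.nonempty_of_ne_empty (Finset.ne_of_mem_erase hS)
    exact lt_of_lt_of_le (hp i) (Finset.single_le_sum (fun j _ => (hp j).le) hi)
  -- events
  set E : ℕ → Set Ω := fun n => {ω | ∀ i : Fin m, ∃ k < n, X k ω = i} with hE
  set A : Fin m → ℕ → Set Ω := fun i n => ⋂ k ∈ Finset.range n, X k ⁻¹' ({i} : Set (Fin m))ᶜ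
    with hA
  have hAmeas : ∀ i n, MeasurableSet (A i n) := fun i n =>
    MeasurableSet.biInter (Set.to_countable _) fun k _ =>
      (hmeas k) (Set.toFinite _).measurableSet
  have hEcompl : ∀ n, (E n)ᶜ = ⋃ i, A i n := by
    intro n
    ext ω
    simp [hE, hA, Set.mem_iInter, not_forall]
  have hEmeas : ∀ n, MeasurableSet (E n) := by
    intro n
    rw [← compl_compl (E n), hEcompl n]
    exact (MeasurableSet.iUnion fun i => hAmeas i n).compl
  set Nset : Set Ω := ⋂ n, (E n)ᶜ with hNset
  have hNmeas : MeasurableSet Nset := MeasurableSet.iInter fun n => (hEmeas n).compl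
  -- single trial probability
  have hsingle : ∀ (k : ℕ) (S : Finset (Fin m)),
      μ (X k ⁻¹' ((↑S : Set (Fin m)))ᶜ) = ENNReal.ofReal (1 - q S) := by
    intro k S
    have hmeasS : MeasurableSet (X k ⁻¹' (↑S : Set (Fin m))) :=
      (hmeas k) (Set.toFinite _).measurableSet
    have hpre : X k ⁻¹' (↑S : Set (Fin m)) = ⋃ i ∈ S, {ω | X k ω = i} := by
      ext ω; simp
    have h1 : μ (X k ⁻¹' (↑S : Set (Fin m))) = ENNReal.ofReal (q S) := by
      have hdisj : (↑S : Set (Fin m)).PairwiseDisjoint fun i => {ω | X k ω = i} := by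
        intro i _ j _ hij
        refine Set.disjoint_left.mpr fun ω hωi hωj => hij ?_
        simp only [Set.mem_setOf_eq] at hωi hωj
        rw [← hωi, hωj]
      have hbu := measure_biUnion_finset (μ := μ) hdisj
        (fun i _ => (hmeas k) (measurableSet_singleton i))
      rw [hpre, hbu]
      rw [Finset.sum_congr rfl (fun i _ => hdist k i)]
      exact (ENNReal.ofReal_sum_of_nonneg (fun i _ => (hp i).le)).symm
    rw [Set.preimage_compl, measure_compl hmeasS (measure_ne_top μ _), measure_univ, h1,
      ENNReal.ofReal_sub _ (hq_nonneg S), ENNReal.ofReal_one]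
  -- joint probability
  have hjoint : ∀ (n : ℕ) (S : Finset (Fin m)),
      μ (⋂ k ∈ Finset.range n, X k ⁻¹' ((↑S : Set (Fin m)))ᶜ)
        = ENNReal.ofReal (1 - q S) ^ n := by
    intro n S
    rw [hindep.meas_biInter (S := Finset.range n)
      (fun k _ => ⟨(↑S : Set (Fin m))ᶜ, (Set.toFinite _).measurableSet, rfl⟩)]
    rw [Finset.prod_congr rfl (fun k _ => hsingle k S), Finset.prod_const, Finset.card_range]
  -- intersections of the A's
  have hAinter : ∀ (n : ℕ) (t : Finset (Fin m)),
      (⋂ i ∈ t, A i n) = ⋂ k ∈ Finset.range n, X k ⁻¹' ((↑t : Set (Fin m)))ᶜ := by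
    intro n t
    ext ω
    simp only [hA, Set.mem_iInter, Set.mem_preimage, Set.mem_compl_iff, Set.mem_singleton_iff,
      Finset.mem_range, Finset.mem_coe]
    constructor
    · intro h k hk hmem
      exact h _ hmem k hk rfl
    · intro h i hi k hk hx
      exact h k hk (hx ▸ hi)
  -- inclusion exclusion
  set f : ℕ → ℝ := fun n => ∑ S ∈ P, (-1:ℝ)^(S.card+1) * (1 - q S)^n with hf
  have h1q_nonneg : ∀ S : Finset (Fin m), (0:ℝ) ≤ 1 - q S := fun S => by
    linarith [hq_le S]
  have hII : ∀ (s : Set Ω), MeasurableSet s →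
      ∫ ω, s.indicator (fun _ => (1:ℝ)) ω ∂μ = (μ s).toReal := fun s hs =>
    integral_indicator_one hs
  have hmuE0 : ∀ n, (μ ((E n)ᶜ)).toReal = f n := by
    intro n
    have hind : ∀ (t : Finset (Fin m)) (ω : Ω),
        ∏ i ∈ t, (A i n).indicator (fun _ => (1:ℝ)) ω
          = (⋂ i ∈ t, A i n).indicator (fun _ => (1:ℝ)) ω := by
      intro t ω
      by_cases h : ω ∈ ⋂ i ∈ t, A i n
      · rw [Set.indicator_of_mem h]
        exact Finset.prod_eq_one fun i hi =>
          Set.indicator_of_mem (Set.mem_iInter₂.mp h i hi) _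
      · rw [Set.indicator_of_notMem h]
        obtain ⟨i, hi, hnot⟩ : ∃ i ∈ t, ω ∉ A i n := by
          by_contra hc
          push_neg at hc
          exact h (Set.mem_iInter₂.mpr hc)
        exact Finset.prod_eq_zero hi (Set.indicator_of_notMem hnot _)
    have hprod : ∀ ω : Ω, ∏ i, ((1:ℝ) - (A i n).indicator (fun _ => (1:ℝ)) ω)
        = (E n).indicator (fun _ => (1:ℝ)) ω := by
      intro ω
      by_cases h : ω ∈ E n
      · rw [Set.indicator_of_mem h]
        refine Finset.prod_eq_one fun i _ => ?_
        have : ω ∉ A i n := by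
          intro hA'
          have : ω ∈ (E n)ᶜ := (hEcompl n).symm ▸ Set.mem_iUnion.mpr ⟨i, hA'⟩
          exact this h
        rw [Set.indicator_of_notMem this, sub_zero]
      · rw [Set.indicator_of_notMem h]
        have : ω ∈ ⋃ i, A i n := (hEcompl n) ▸ h
        obtain ⟨i, hi⟩ := Set.mem_iUnion.mp this
        refine Finset.prod_eq_zero (Finset.mem_univ i) ?_
        rw [Set.indicator_of_mem hi, sub_self]
    have hmuA : ∀ t : Finset (Fin m), (μ (⋂ i ∈ t, A i n)).toReal = (1 - q t)^n := by
      intro t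
      rw [hAinter n t, hjoint n t, ENNReal.toReal_pow, ENNReal.toReal_ofReal (h1q_nonneg t)]
    have hintg : ∫ ω, (E n).indicator (fun _ => (1:ℝ)) ω ∂μ
        = ∑ t ∈ (Finset.univ : Finset (Fin m)).powerset, (-1:ℝ)^t.card * (1 - q t)^n := by
      calc ∫ ω, (E n).indicator (fun _ => (1:ℝ)) ω ∂μ
          = ∫ ω, ∑ t ∈ (Finset.univ : Finset (Fin m)).powerset,
              (-1:ℝ)^t.card * (⋂ i ∈ t, A i n).indicator (fun _ => (1:ℝ)) ω ∂μ := by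
            refine integral_congr_ae (Filter.Eventually.of_forall fun ω => ?_)
            rw [← hprod ω, aux_prod_one_sub]
            exact Finset.sum_congr rfl fun t _ => by rw [hind t ω]
        _ = ∑ t ∈ (Finset.univ : Finset (Fin m)).powerset,
              ∫ ω, (-1:ℝ)^t.card * (⋂ i ∈ t, A i n).indicator (fun _ => (1:ℝ)) ω ∂μ := by
            refine integral_finset_sum _ fun t _ => ?_
            exact ((integrable_const (1:ℝ)).indicator
              (MeasurableSet.biInter (Set.to_countable _) fun i _ => hAmeas i n)).const_mul _
        _ = ∑ t ∈ (Finset.univ : Finset (Fin m)).powerset, (-1:ℝ)^t.card * (1 - q t)^n := by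
            refine Finset.sum_congr rfl fun t _ => ?_
            rw [integral_const_mul, ← hmuA t]
            congr 1
            exact hII _ (MeasurableSet.biInter (Set.to_countable _) fun i _ => hAmeas i n)
    have hIndEq : (μ (E n)).toReal
        = ∑ t ∈ (Finset.univ : Finset (Fin m)).powerset, (-1:ℝ)^t.card * (1 - q t)^n := by
      rw [← hintg, hII _ (hEmeas n)]
    have hsplit : ∑ t ∈ (Finset.univ : Finset (Fin m)).powerset, (-1:ℝ)^t.card * (1 - q t)^n
        = (∑ t ∈ P, (-1:ℝ)^t.card * (1 - q t)^n) + 1 := by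
      rw [hP, ← Finset.sum_erase_add _ _ (Finset.empty_mem_powerset _)]
      congr 1
      simp [hqdef]
    have hcompl : (μ ((E n)ᶜ)).toReal = 1 - (μ (E n)).toReal := by
      rw [measure_compl (hEmeas n) (measure_ne_top μ _), measure_univ,
        ENNReal.toReal_sub_of_le prob_le_one ENNReal.one_ne_top, ENNReal.toReal_one]
    rw [hcompl, hIndEq, hsplit]
    have hfn : f n = ∑ S ∈ P, (-1:ℝ)^(S.card+1) * (1 - q S)^n := rfl
    rw [hfn,
      Finset.sum_congr rfl (fun S _ => (by ring :
        (-1:ℝ)^(S.card+1) * (1 - q S)^n = -((-1:ℝ)^S.card * (1 - q S)^n))),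
      Finset.sum_neg_distrib]
    ring
  have hmuE : ∀ n, μ ((E n)ᶜ) = ENNReal.ofReal (f n) := by
    intro n
    rw [← hmuE0 n, ENNReal.ofReal_toReal (measure_ne_top μ _)]
  have hf_nonneg : ∀ n, 0 ≤ f n := fun n => (hmuE0 n) ▸ ENNReal.toReal_nonneg
  have h1q_lt : ∀ S ∈ P, (1:ℝ) - q S < 1 := fun S hS => by linarith [hq_pos S hS]
  have hgeom : ∀ S ∈ P, Summable (fun n : ℕ => (1 - q S)^n) := fun S hS =>
    summable_geometric_of_lt_one (h1q_nonneg S) (h1q_lt S hS)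
  have hf_summable : Summable f := by
    have hf_le : ∀ n, f n ≤ ∑ S ∈ P, (1 - q S)^n := by
      intro n
      rw [hf]
      refine Finset.sum_le_sum fun S hS => ?_
      have hx : (0:ℝ) ≤ (1 - q S)^n := pow_nonneg (h1q_nonneg S) n
      rcases neg_one_pow_eq_or ℝ (S.card + 1) with h | h <;> rw [h] <;> linarith
    exact Summable.of_nonneg_of_le hf_nonneg hf_le (summable_sum fun S hS => hgeom S hS)
  have htsum_f : ∑' n, f n = ∑ S ∈ P, (-1:ℝ)^(S.card+1) * (q S)⁻¹ := by
    rw [Summable.tsum_finsetSum (fun S hS => (hgeom S hS).mul_left _)]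
    refine Finset.sum_congr rfl fun S hS => ?_
    rw [tsum_mul_left, tsum_geometric_of_lt_one (h1q_nonneg S) (h1q_lt S hS)]
    congr 1
    rw [show (1:ℝ) - (1 - q S) = q S by ring]
  -- null set
  have hNzero : μ Nset = 0 := by
    have hle : ∀ n, μ Nset ≤ ENNReal.ofReal (f n) := fun n =>
      (measure_mono (Set.iInter_subset _ n)).trans (hmuE n).le
    have htend : Tendsto (fun n => ENNReal.ofReal (f n)) atTop (nhds 0) := by
      rw [← ENNReal.ofReal_zero]
      exact (ENNReal.continuous_ofReal.tendsto 0).comp hf_summable.tendsto_atTop_zero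
    simpa using ge_of_tendsto' htend hle |>.antisymm zero_le
  -- identification of {n < T}
  have hTset : ∀ n, {ω | n < T ω} = (E n)ᶜ \ Nset := by
    intro n
    have hmono : ∀ (ω : Ω) (a b : ℕ), a ≤ b → ω ∈ E a → ω ∈ E b := by
      intro ω a b hab ha i
      obtain ⟨k, hk, hx⟩ := ha i
      exact ⟨k, lt_of_lt_of_le hk hab, hx⟩
    ext ω
    simp only [Set.mem_setOf_eq, Set.mem_diff, Set.mem_compl_iff, hNset, Set.mem_iInter,
      not_forall, not_not]
    rw [hT ω]
    have hsetEq : {n : ℕ | ∀ i : Fin m, ∃ k < n, X k ω = i} = {k : ℕ | ω ∈ E k} := rfl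
    rw [hsetEq]
    constructor
    · intro h
      have hne : {k : ℕ | ω ∈ E k}.Nonempty := by
        by_contra hemp
        rw [Set.not_nonempty_iff_eq_empty.mp hemp, Nat.sInf_empty] at h
        omega
      refine ⟨fun hEn => absurd (Nat.sInf_le (show n ∈ {k : ℕ | ω ∈ E k} from hEn))
        (by omega), ?_⟩
      obtain ⟨k, hk⟩ := hne
      exact ⟨k, hk⟩
    · rintro ⟨hEn, k, hk⟩
      by_contra hle
      push_neg at hle
      have hmem := Nat.sInf_mem (⟨k, hk⟩ : {j : ℕ | ω ∈ E j}.Nonempty)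
      exact hEn (hmono ω _ _ hle hmem)
  have hmuT : ∀ n, μ {ω | n < T ω} = ENNReal.ofReal (f n) := by
    intro n
    rw [hTset n, measure_diff_null hNzero, hmuE n]
  -- lintegral computation
  have hTlift : ∀ ω, (T ω : ENNReal)
      = ∑' n, Set.indicator ((E n)ᶜ \ Nset) (fun _ => (1:ENNReal)) ω := by
    intro ω
    rw [← aux_tsum_lt (T ω)]
    congr 1
    ext n
    rw [← hTset n]
    simp [Set.indicator_apply, Set.mem_setOf_eq]
  have hlin : ∫⁻ ω, (T ω : ENNReal) ∂μ = ∑' n, ENNReal.ofReal (f n) := by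
    calc ∫⁻ ω, (T ω : ENNReal) ∂μ
        = ∫⁻ ω, ∑' n, Set.indicator ((E n)ᶜ \ Nset) (fun _ => (1:ENNReal)) ω ∂μ :=
          lintegral_congr hTlift
      _ = ∑' n, ∫⁻ ω, Set.indicator ((E n)ᶜ \ Nset) (fun _ => (1:ENNReal)) ω ∂μ :=
          lintegral_tsum fun n =>
            (measurable_const.indicator ((hEmeas n).compl.diff hNmeas)).aemeasurable
      _ = ∑' n, μ ((E n)ᶜ \ Nset) := by
          refine tsum_congr fun n => ?_
          exact lintegral_indicator_one ((hEmeas n).compl.diff hNmeas)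
      _ = ∑' n, ENNReal.ofReal (f n) := by
          refine tsum_congr fun n => ?_
          rw [← hTset n, hmuT n]
  -- measurability of T (as a real function)
  have hTmeas : Measurable fun ω => (T ω : ℝ) := by
    have h1 : Measurable fun ω => (T ω : ENNReal) := by
      rw [show (fun ω => (T ω : ENNReal))
          = fun ω => ∑' n, Set.indicator ((E n)ᶜ \ Nset) (fun _ => (1:ENNReal)) ω
          from funext hTlift]
      exact Measurable.ennreal_tsum fun n =>
        measurable_const.indicator ((hEmeas n).compl.diff hNmeas)
    have h2 : (fun ω => (T ω : ℝ)) = fun ω => ((T ω : ENNReal)).toReal := by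
      funext ω; simp
    rw [h2]
    exact h1.ennreal_toReal
  -- LHS
  have hLHS : ∫ ω, (T ω : ℝ) ∂μ = ∑ S ∈ P, (-1:ℝ)^(S.card+1) * (q S)⁻¹ := by
    rw [integral_eq_lintegral_of_nonneg_ae (Filter.Eventually.of_forall fun ω => by positivity)
      hTmeas.aestronglyMeasurable]
    have : ∀ ω, ENNReal.ofReal ((T ω : ℝ)) = (T ω : ENNReal) := fun ω => by
      simp [ENNReal.ofReal_natCast]
    rw [lintegral_congr this, hlin,
      ← ENNReal.ofReal_tsum_of_nonneg hf_nonneg hf_summable,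
      ENNReal.toReal_ofReal (tsum_nonneg hf_nonneg), htsum_f]
  -- RHS
  have hRHS : (∫ t in Set.Ioi (0:ℝ), (1 - ∏ i, (1 - Real.exp (-(p i) * t))))
      = ∑ S ∈ P, (-1:ℝ)^(S.card+1) * (q S)⁻¹ := by
    have hpt : ∀ t : ℝ, (1 - ∏ i, (1 - Real.exp (-(p i) * t)))
        = ∑ S ∈ P, (-1:ℝ)^(S.card+1) * Real.exp (-(q S) * t) := by
      intro t
      rw [aux_prod_one_sub]
      rw [hP, ← Finset.sum_erase_add _ _ (Finset.empty_mem_powerset (Finset.univ : Finset (Fin m)))]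
      simp only [Finset.card_empty, pow_zero, Finset.prod_empty, mul_one]
      have hexp : ∀ S ∈ P, ∏ i ∈ S, Real.exp (-(p i) * t) = Real.exp (-(q S) * t) := by
        intro S _
        rw [← Real.exp_sum]
        congr 1
        simp only [← Finset.sum_mul, Finset.sum_neg_distrib, hqdef]
      rw [Finset.sum_congr rfl (fun S hS => by rw [hexp S hS])]
      rw [Finset.sum_congr rfl (fun S (_ : S ∈ P) => (by ring :
        (-1:ℝ)^(S.card+1) * Real.exp (-(q S) * t) = -((-1:ℝ)^S.card * Real.exp (-(q S) * t)))),
      Finset.sum_neg_distrib]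
      ring
    simp only [hpt]
    rw [integral_finset_sum _ (fun S hS =>
      ((exp_neg_integrableOn_Ioi 0 (hq_pos S hS)).const_mul _ : _))]
    refine Finset.sum_congr rfl fun S hS => ?_
    rw [integral_const_mul, aux_integral_exp (q S) (hq_pos S hS)]
  rw [hLHS, hRHS]
end

section
/- With the notation of the lattice-point counting function φ on ℕ^{k-l} with positive reals log π_{l+1} ≤ ... ≤ log π_k, S = ∑_j log π_j, P = ∏_j log π_j, and φ̃(i) the i-th vector in increasing order of |·|_π (assuming all |·|_π values distinct): for all i ≥ 1, (i·(k-l)!·P)^{1/(k-l)} - S ≤ |φ̃(i)|_π ≤ (i·(k-l)!·P)^{1/(k-l)}. -/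
open Finset

private lemma pow_sub_pow_le' (n : ℕ) {a b : ℝ} (hb : 0 ≤ b) (hab : b ≤ a) :
    a ^ (n + 1) - b ^ (n + 1) ≤ (n + 1 : ℝ) * a ^ n * (a - b) := by
  induction n with
  | zero => simp
  | succ n ih =>
    have ha : 0 ≤ a := hb.trans hab
    have h1 : a * (a ^ (n + 1) - b ^ (n + 1)) ≤ a * ((n + 1 : ℝ) * a ^ n * (a - b)) :=
      mul_le_mul_of_nonneg_left ih ha
    have h2 : b ^ (n + 1) ≤ a ^ (n + 1) := pow_le_pow_left₀ hb hab _
    have h3 : 0 ≤ a - b := sub_nonneg.2 hab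
    have h4 : b ^ (n + 1) * (a - b) ≤ a ^ (n + 1) * (a - b) :=
      mul_le_mul_of_nonneg_right h2 h3
    have hid : a ^ (n+1+1) - b ^ (n+1+1)
        = a * (a ^ (n+1) - b ^ (n+1)) + b ^ (n+1) * (a - b) := by ring
    have hsum : a * ((↑n + 1) * a ^ n * (a - b)) + a ^ (n+1) * (a - b)
        = ((n : ℝ) + 1 + 1) * a ^ (n+1) * (a - b) := by ring
    push_cast
    linarith [h1, h4, hid, hsum]

private lemma le_pow_sub_pow' (n : ℕ) {a b : ℝ} (hb : 0 ≤ b) (hab : b ≤ a) :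
    (n + 1 : ℝ) * b ^ n * (a - b) ≤ a ^ (n + 1) - b ^ (n + 1) := by
  induction n with
  | zero => simp
  | succ n ih =>
    have ha : 0 ≤ a := hb.trans hab
    have h1 : a * ((n + 1 : ℝ) * b ^ n * (a - b)) ≤ a * (a ^ (n + 1) - b ^ (n + 1)) :=
      mul_le_mul_of_nonneg_left ih ha
    have h3 : 0 ≤ a - b := sub_nonneg.2 hab
    have hbn : 0 ≤ b ^ n := pow_nonneg hb n
    have h5 : b * ((n + 1 : ℝ) * b ^ n * (a - b)) ≤ a * ((n + 1 : ℝ) * b ^ n * (a - b)) := by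
      apply mul_le_mul_of_nonneg_right hab
      positivity
    have hid : a ^ (n+1+1) - b ^ (n+1+1)
        = a * (a ^ (n+1) - b ^ (n+1)) + b ^ (n+1) * (a - b) := by ring
    have hsum : b * ((↑n + 1) * b ^ n * (a - b)) + b ^ (n+1) * (a - b)
        = ((n : ℝ) + 1 + 1) * b ^ (n+1) * (a - b) := by ring
    push_cast
    linarith [h1, h5, hid, hsum]

private lemma count_finite (d : ℕ) (w : Fin d → ℝ) (hw : ∀ j, 0 < w j) (T : ℝ) :
    {y : Fin d → ℕ | ∑ j, (y j : ℝ) * w j ≤ T}.Finite := by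
  apply Set.Finite.subset
    (Set.Finite.pi (fun j : Fin d => Set.finite_Iic (⌊T / w j⌋₊)))
  intro y hy
  simp only [Set.mem_pi, Set.mem_univ, Set.mem_Iic, forall_true_left]
  intro j
  apply Nat.le_floor
  rw [le_div_iff₀ (hw j)]
  calc (y j : ℝ) * w j ≤ ∑ k, (y k : ℝ) * w k := by
        apply Finset.single_le_sum (f := fun k => (y k : ℝ) * w k)
          (fun k _ => mul_nonneg (Nat.cast_nonneg _) (hw k).le) (Finset.mem_univ j)
    _ ≤ T := hy

private lemma cons_inj (d : ℕ) (m : ℕ) :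
    Function.Injective (fun z : Fin d → ℕ => Fin.cons m z : (Fin d → ℕ) → (Fin (d+1) → ℕ)) := by
  intro z1 z2 h
  have := congrArg Fin.tail h
  simpa [Fin.tail_cons] using this

private lemma countSlice (d : ℕ) (w : Fin (d+1) → ℝ) (hw : ∀ j, 0 < w j) (T : ℝ) :
    Set.ncard {y : Fin (d+1) → ℕ | ∑ j, (y j : ℝ) * w j ≤ T} =
    ∑ m ∈ Finset.range (⌊T / w 0⌋₊ + 1),
      Set.ncard {z : Fin d → ℕ | ∑ j, (z j : ℝ) * w j.succ ≤ T - m * w 0} := by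
  set M := ⌊T / w 0⌋₊ with hM
  have hf : ∀ m : ℕ, {z : Fin d → ℕ | ∑ j, (z j : ℝ) * w j.succ ≤ T - m * w 0}.Finite :=
    fun m => count_finite d (fun j => w j.succ) (fun j => hw j.succ) _
  have hset : {y : Fin (d+1) → ℕ | ∑ j, (y j : ℝ) * w j ≤ T} =
      ↑((Finset.range (M + 1)).biUnion
        (fun m => (hf m).toFinset.image (fun z => (Fin.cons m z : Fin (d+1) → ℕ)))) := by
    ext y
    simp only [Finset.coe_biUnion, Finset.mem_coe, Finset.mem_biUnion, Finset.mem_range,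
      Finset.mem_image, Set.Finite.mem_toFinset, Set.mem_setOf_eq, Set.mem_iUnion]
    constructor
    · intro hy
      refine ⟨y 0, ?_, Fin.tail y, ?_, Fin.cons_self_tail y⟩
      · have h1 : (y 0 : ℝ) * w 0 ≤ T := by
          calc (y 0 : ℝ) * w 0 ≤ ∑ k, (y k : ℝ) * w k := by
                apply Finset.single_le_sum (f := fun k => (y k : ℝ) * w k)
                  (fun k _ => mul_nonneg (Nat.cast_nonneg _) (hw k).le) (Finset.mem_univ 0)
            _ ≤ T := hy
        have : (y 0 : ℝ) ≤ T / w 0 := (le_div_iff₀ (hw 0)).2 h1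
        exact Nat.lt_succ_of_le (Nat.le_floor this)
      · have := hy
        rw [Fin.sum_univ_succ] at this
        have heq : ∀ j : Fin d, (Fin.tail y j : ℝ) * w j.succ = (y j.succ : ℝ) * w j.succ := by
          intro j; rfl
        rw [Finset.sum_congr rfl (fun j _ => heq j)]
        linarith
    · rintro ⟨m, hm, z, hz, rfl⟩
      rw [Fin.sum_univ_succ]
      simp only [Fin.cons_zero, Fin.cons_succ]
      linarith
  rw [hset, Set.ncard_coe_finset]
  rw [Finset.card_biUnion]
  · apply Finset.sum_congr rfl
    intro m _
    rw [Finset.card_image_of_injective _ (cons_inj d m), Set.ncard_eq_toFinset_card _ (hf m)]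
  · intro m1 _ m2 _ hne
    simp only [Finset.disjoint_left, Finset.mem_image, Set.Finite.mem_toFinset]
    rintro y ⟨z1, _, rfl⟩ ⟨z2, _, h⟩
    apply hne
    have := congrArg (fun f => f 0) h
    exact (by simpa [Fin.cons_zero] using this : m2 = m1).symm

private lemma lower_bound (d : ℕ) (w : Fin d → ℝ) (hw : ∀ j, 0 < w j) (T : ℝ) (hT : 0 ≤ T) :
    T ^ d ≤ ({y : Fin d → ℕ | ∑ j, (y j : ℝ) * w j ≤ T}.ncard : ℝ)
        * (d.factorial : ℝ) * ∏ j, w j := by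
  induction d generalizing T with
  | zero =>
    have : {y : Fin 0 → ℕ | ∑ j, (y j : ℝ) * w j ≤ T} = Set.univ := by
      ext y; simp [hT]
    rw [this]
    simp [Set.ncard_univ, Nat.card_eq_fintype_card]
  | succ d ih =>
    set w0 := w 0 with hw0
    set M := ⌊T / w0⌋₊ with hMdef
    have hw0pos : 0 < w0 := hw 0
    have hMle : (M : ℝ) * w0 ≤ T := by
      rw [← le_div_iff₀ hw0pos]
      exact Nat.floor_le (div_nonneg hT hw0pos.le)
    have hmle : ∀ m ∈ Finset.range (M + 1), 0 ≤ T - (m : ℝ) * w0 := by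
      intro m hm
      rw [Finset.mem_range, Nat.lt_succ_iff] at hm
      have : (m : ℝ) * w0 ≤ (M : ℝ) * w0 := by
        apply mul_le_mul_of_nonneg_right _ hw0pos.le
        exact_mod_cast hm
      linarith
    rw [countSlice d w hw T]
    -- key telescoping bound
    have key : T ^ (d + 1) ≤ ∑ m ∈ Finset.range (M + 1),
        ((d : ℝ) + 1) * w0 * (T - (m : ℝ) * w0) ^ d := by
      set g : ℕ → ℝ := fun m => (max (T - (m : ℝ) * w0) 0) ^ (d + 1) with hg
      have tele : ∑ m ∈ Finset.range (M + 1), (g m - g (m + 1)) = g 0 - g (M + 1) :=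
        Finset.sum_range_sub' g (M + 1)
      have hg0 : g 0 = T ^ (d + 1) := by simp [hg, max_eq_left hT]
      have hgM : g (M + 1) = 0 := by
        have hlt : T < ((M : ℝ) + 1) * w0 := by
          rw [← div_lt_iff₀ hw0pos]
          exact_mod_cast Nat.lt_floor_add_one (T / w0)
        have hneg : T - ((M : ℝ) + 1) * w0 ≤ 0 := by linarith
        simp only [hg]
        push_cast
        rw [max_eq_right hneg, zero_pow (Nat.succ_ne_zero d)]
      have hterm : ∀ m ∈ Finset.range (M + 1),
          g m - g (m + 1) ≤ ((d : ℝ) + 1) * w0 * (T - (m : ℝ) * w0) ^ d := by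
        intro m hm
        have ha : 0 ≤ T - (m : ℝ) * w0 := hmle m hm
        set a := T - (m : ℝ) * w0 with hadef
        have hgm : g m = a ^ (d + 1) := by simp [hg, max_eq_left ha, ← hadef]
        set b' := max (T - ((m : ℕ) + 1 : ℕ) * w0) 0 with hb'
        have hgm1 : g (m + 1) = b' ^ (d + 1) := by simp [hg, hb']
        have hb'0 : 0 ≤ b' := le_max_right _ _
        have hb'a : b' ≤ a := by
          apply max_le _ ha
          push_cast
          have := hw0pos
          simp only [hadef]
          push_cast
          linarith
        have hab' : a - b' ≤ w0 := by
          have : T - ((m : ℕ) + 1 : ℕ) * w0 ≤ b' := le_max_left _ _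
          push_cast at this
          simp only [hadef]
          linarith
        have h1 := pow_sub_pow_le' d hb'0 hb'a
        have h2 : ((d : ℝ) + 1) * a ^ d * (a - b') ≤ ((d : ℝ) + 1) * a ^ d * w0 := by
          apply mul_le_mul_of_nonneg_left hab'
          positivity
        rw [hgm, hgm1]
        push_cast at h1
        calc a ^ (d + 1) - b' ^ (d + 1) ≤ ((d : ℝ) + 1) * a ^ d * (a - b') := h1
          _ ≤ ((d : ℝ) + 1) * a ^ d * w0 := h2
          _ = ((d : ℝ) + 1) * w0 * a ^ d := by ring
      calc T ^ (d + 1) = g 0 - g (M + 1) := by rw [hg0, hgM]; ring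
        _ = ∑ m ∈ Finset.range (M + 1), (g m - g (m + 1)) := tele.symm
        _ ≤ _ := Finset.sum_le_sum hterm
    refine key.trans ?_
    rw [Nat.cast_sum, Finset.sum_mul, Finset.sum_mul]
    apply Finset.sum_le_sum
    intro m hm
    have ihm := ih (fun j => w j.succ) (fun j => hw j.succ) (T - (m : ℝ) * w0) (hmle m hm)
    have hprod : ∏ j : Fin (d + 1), w j = w0 * ∏ j : Fin d, w j.succ := Fin.prod_univ_succ w
    rw [hprod, Nat.factorial_succ]
    push_cast
    have hNm : (0 : ℝ) ≤
        ({z : Fin d → ℕ | ∑ j, (z j : ℝ) * w j.succ ≤ T - (m : ℝ) * w0}.ncard : ℝ) :=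
      Nat.cast_nonneg _
    nlinarith [ihm, hw0pos, mul_le_mul_of_nonneg_left ihm hw0pos.le]

private lemma upper_bound (d : ℕ) (w : Fin d → ℝ) (hw : ∀ j, 0 < w j) (T : ℝ) (hT : 0 ≤ T) :
    ({y : Fin d → ℕ | ∑ j, (y j : ℝ) * w j ≤ T}.ncard : ℝ)
        * (d.factorial : ℝ) * ∏ j, w j ≤ (T + ∑ j, w j) ^ d := by
  induction d generalizing T with
  | zero =>
    have : {y : Fin 0 → ℕ | ∑ j, (y j : ℝ) * w j ≤ T} = Set.univ := by
      ext y; simp [hT]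
    rw [this]
    simp [Set.ncard_univ, Nat.card_eq_fintype_card]
  | succ d ih =>
    set w0 := w 0 with hw0
    set M := ⌊T / w0⌋₊ with hMdef
    set S' := ∑ j : Fin d, w j.succ with hS'
    have hS'nonneg : 0 ≤ S' := Finset.sum_nonneg (fun j _ => (hw j.succ).le)
    have hw0pos : 0 < w0 := hw 0
    have hMle : (M : ℝ) * w0 ≤ T := by
      rw [← le_div_iff₀ hw0pos]
      exact Nat.floor_le (div_nonneg hT hw0pos.le)
    have hmle : ∀ m ∈ Finset.range (M + 1), 0 ≤ T - (m : ℝ) * w0 := by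
      intro m hm
      rw [Finset.mem_range, Nat.lt_succ_iff] at hm
      have : (m : ℝ) * w0 ≤ (M : ℝ) * w0 := by
        apply mul_le_mul_of_nonneg_right _ hw0pos.le
        exact_mod_cast hm
      linarith
    have hSsum : ∑ j : Fin (d + 1), w j = w0 + S' := Fin.sum_univ_succ w
    rw [countSlice d w hw T, hSsum]
    -- telescoping upper bound
    set h : ℕ → ℝ := fun m => (T + S' + w0 - (m : ℝ) * w0) ^ (d + 1) with hh
    have tele : ∑ m ∈ Finset.range (M + 1), (h m - h (m + 1)) = h 0 - h (M + 1) :=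
      Finset.sum_range_sub' h (M + 1)
    have hterm : ∀ m ∈ Finset.range (M + 1),
        ((d : ℝ) + 1) * w0 * (T - (m : ℝ) * w0 + S') ^ d ≤ h m - h (m + 1) := by
      intro m hm
      have ha : 0 ≤ T - (m : ℝ) * w0 := hmle m hm
      set b := T + S' - (m : ℝ) * w0 with hbdef
      have hb0 : 0 ≤ b := by simp only [hbdef]; linarith
      have key := le_pow_sub_pow' d hb0 (le_of_lt (by linarith : b < b + w0))
      have hhm : h m = (b + w0) ^ (d + 1) := by
        simp only [hh, hbdef]; ring_nf
      have hhm1 : h (m + 1) = b ^ (d + 1) := by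
        simp only [hh, hbdef]; push_cast; ring_nf
      rw [hhm, hhm1]
      have : b + w0 - b = w0 := by ring
      rw [this] at key
      calc ((d : ℝ) + 1) * w0 * (T - (m : ℝ) * w0 + S') ^ d
          = ((d : ℝ) + 1) * b ^ d * w0 := by rw [hbdef]; ring_nf
        _ ≤ (b + w0) ^ (d + 1) - b ^ (d + 1) := key
    have hlast : 0 ≤ h (M + 1) := by
      have : 0 ≤ T + S' + w0 - ((M : ℕ) + 1 : ℕ) * w0 := by push_cast; linarith
      exact pow_nonneg this _
    have step2 : ∑ m ∈ Finset.range (M + 1),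
          ((d : ℝ) + 1) * w0 * (T - (m : ℝ) * w0 + S') ^ d ≤ (T + (w0 + S')) ^ (d + 1) := by
      calc ∑ m ∈ Finset.range (M + 1), ((d : ℝ) + 1) * w0 * (T - (m : ℝ) * w0 + S') ^ d
          ≤ ∑ m ∈ Finset.range (M + 1), (h m - h (m + 1)) := Finset.sum_le_sum hterm
        _ = h 0 - h (M + 1) := tele
        _ ≤ h 0 := by linarith
        _ = (T + (w0 + S')) ^ (d + 1) := by simp only [hh]; push_cast; ring_nf
    refine le_trans ?_ step2
    rw [Nat.cast_sum, Finset.sum_mul, Finset.sum_mul]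
    apply Finset.sum_le_sum
    intro m hm
    have ihm := ih (fun j => w j.succ) (fun j => hw j.succ) (T - (m : ℝ) * w0) (hmle m hm)
    have hprod : ∏ j : Fin (d + 1), w j = w0 * ∏ j : Fin d, w j.succ := Fin.prod_univ_succ w
    rw [hprod, Nat.factorial_succ]
    push_cast
    nlinarith [ihm, hw0pos, mul_le_mul_of_nonneg_left ihm hw0pos.le]

/-- Bounds on the weight of the `i`-th sub-composition in increasing weight order. -/
theorem phiTilde_bounds
    (d : ℕ) (hd : 0 < d) (p : Fin d → ℝ) (hp : ∀ j, 1 < p j) (hmono : Monotone p)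
    (wsum : (Fin d → ℕ) → ℝ)
    (hw : ∀ x, wsum x = ∑ j, (x j : ℝ) * Real.log (p j))
    (hinj : Function.Injective wsum)
    (i : ℕ) (hi : 1 ≤ i) (x : Fin d → ℕ)
    (hrank : Set.ncard {y : Fin d → ℕ | wsum y ≤ wsum x} = i) :
    ((i : ℝ) * d.factorial * ∏ j, Real.log (p j)) ^ ((1 : ℝ) / d)
        - (∑ j, Real.log (p j)) ≤ wsum x ∧
    wsum x ≤ ((i : ℝ) * d.factorial * ∏ j, Real.log (p j)) ^ ((1 : ℝ) / d) := by
  set w : Fin d → ℝ := fun j => Real.log (p j) with hwdef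
  have hwpos : ∀ j, 0 < w j := fun j => Real.log_pos (hp j)
  set T := wsum x with hTdef
  have hT : 0 ≤ T := by
    rw [hTdef, hw x]
    exact Finset.sum_nonneg (fun j _ => mul_nonneg (Nat.cast_nonneg _) (hwpos j).le)
  have hseteq : {y : Fin d → ℕ | wsum y ≤ wsum x} =
      {y : Fin d → ℕ | ∑ j, (y j : ℝ) * w j ≤ T} := by
    ext y; simp only [Set.mem_setOf_eq, hw y, hTdef, hwdef]
  have hrank' : Set.ncard {y : Fin d → ℕ | ∑ j, (y j : ℝ) * w j ≤ T} = i := by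
    rw [← hseteq]; exact hrank
  have hlow := lower_bound d w hwpos T hT
  have hupp := upper_bound d w hwpos T hT
  rw [hrank'] at hlow hupp
  have hTeq : wsum x = T := rfl
  set C := (i : ℝ) * (d.factorial : ℝ) * ∏ j, w j with hCdef
  have hCnonneg : 0 ≤ C := le_trans (pow_nonneg hT d) hlow
  have hd' : (d : ℝ) ≠ 0 := Nat.cast_ne_zero.2 hd.ne'
  have hrpow : ∀ t : ℝ, 0 ≤ t → (t ^ d : ℝ) ^ ((1 : ℝ) / d) = t := by
    intro t ht
    rw [← Real.rpow_natCast t d, ← Real.rpow_mul ht, mul_one_div_cancel hd', Real.rpow_one]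
  constructor
  · -- lower bound
    have hTS : 0 ≤ T + ∑ j, w j :=
      add_nonneg hT (Finset.sum_nonneg (fun j _ => (hwpos j).le))
    have h1 : C ^ ((1 : ℝ) / d) ≤ ((T + ∑ j, w j) ^ d) ^ ((1 : ℝ) / d) :=
      Real.rpow_le_rpow hCnonneg hupp (by positivity)
    rw [hrpow _ hTS] at h1
    have : C ^ ((1 : ℝ) / d) - ∑ j, w j ≤ T := by linarith
    exact this
  · -- upper bound
    have h1 : (T ^ d) ^ ((1 : ℝ) / d) ≤ C ^ ((1 : ℝ) / d) :=
      Real.rpow_le_rpow (pow_nonneg hT d) hlow (by positivity)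
    rw [hrpow _ hT] at h1
    exact h1
end

section
/- Let M_{n,i} = C(n-i-1, n/2-1) - C(n-i-1, n/2) for even n and 1 ≤ i ≤ n/2. Then M_{n,i} ≤ 2^{n-i+1} · n^{-3/2} · i · √(2/π) for all such n and i. -/
open Real Stirling Nat

lemma sqrt_pi_le_stirlingSeq (n : ℕ) (hn : 1 ≤ n) : Real.sqrt π ≤ stirlingSeq n := by
  refine le_of_tendsto tendsto_stirlingSeq_sqrt_pi ?_
  filter_upwards [Filter.eventually_ge_atTop n] with k hk
  obtain ⟨n', rfl⟩ := Nat.exists_eq_add_of_le hn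
  obtain ⟨k', rfl⟩ := Nat.exists_eq_add_of_le (le_trans hn hk)
  have := stirlingSeq'_antitone (show n' ≤ k' by omega)
  simpa [Nat.add_comm, Nat.succ_eq_add_one] using this

lemma factorial_eq_stirling (n : ℕ) (hn : 1 ≤ n) :
    (n ! : ℝ) = stirlingSeq n * (Real.sqrt (2 * n) * ((n : ℝ) / Real.exp 1) ^ n) := by
  have h : Real.sqrt (2 * n) * ((n : ℝ) / Real.exp 1) ^ n ≠ 0 := by
    have : (0:ℝ) < n := by exact_mod_cast hn
    positivity
  rw [stirlingSeq, div_mul_cancel₀ _ h]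

lemma central_binom_bound (k : ℕ) (hk : 1 ≤ k) :
    ((2 * k).choose k : ℝ) * Real.sqrt (π * k) ≤ 4 ^ k := by
  have hkR : (0:ℝ) < k := by exact_mod_cast hk
  have hA : (0:ℝ) < ((k : ℝ) / Real.exp 1) ^ k := by positivity
  set s := stirlingSeq
  set A : ℝ := ((k : ℝ) / Real.exp 1) ^ k with hAdef
  have hfk : (k ! : ℝ) = s k * (Real.sqrt (2 * k) * A) := factorial_eq_stirling k hk
  have hf2k : ((2 * k)! : ℝ) = s (2 * k) * (Real.sqrt (2 * (2 * k)) * ((2 * (k:ℝ)) / Real.exp 1) ^ (2 * k)) := by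
    have := factorial_eq_stirling (2 * k) (by omega)
    simpa using this
  have hpow : ((2 * (k:ℝ)) / Real.exp 1) ^ (2 * k) = 4 ^ k * A ^ 2 := by
    rw [hAdef, ← pow_mul, mul_comm k 2, show (2 * (k:ℝ)) / Real.exp 1 = 2 * ((k:ℝ) / Real.exp 1) by ring,
      mul_pow, pow_mul]
    norm_num
  have hchoose : ((2 * k).choose k : ℝ) * k ! * k ! = (2 * k)! := by
    have h := Nat.choose_mul_factorial_mul_factorial (show k ≤ 2 * k by omega)
    rw [show 2 * k - k = k by omega] at h
    exact_mod_cast congrArg (Nat.cast (R := ℝ)) h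
  -- key inequality
  have hsk : Real.sqrt π ≤ s k := sqrt_pi_le_stirlingSeq k hk
  have hs2k_pos : 0 < s (2 * k) := by
    have := stirlingSeq'_pos (2 * k - 1); simpa [Nat.sub_add_cancel (show 1 ≤ 2*k by omega)] using this
  have hmono : s (2 * k) ≤ s k := by
    obtain ⟨k', rfl⟩ := Nat.exists_eq_add_of_le hk
    have h := stirlingSeq'_antitone (show k' ≤ 2 * (1 + k') - 1 by omega)
    simp only [Function.comp, Nat.succ_eq_add_one] at h
    convert h using 2
    · rfl
    all_goals omega
  have hkey : s (2 * k) * Real.sqrt π ≤ s k * s k :=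
    mul_le_mul hmono hsk (Real.sqrt_nonneg _) (le_trans (Real.sqrt_nonneg _) hsk)
  -- sqrt computations
  have h1 : Real.sqrt (2 * (2 * (k:ℝ))) = 2 * Real.sqrt k := by
    rw [show (2 : ℝ) * (2 * (k:ℝ)) = (2:ℝ)^2 * (k:ℝ) by ring,
      Real.sqrt_mul (by positivity), Real.sqrt_sq (by norm_num : (0:ℝ) ≤ 2)]
  have h2 : Real.sqrt (π * k) = Real.sqrt π * Real.sqrt k := Real.sqrt_mul pi_pos.le _
  have h3 : Real.sqrt k * Real.sqrt k = k := Real.mul_self_sqrt hkR.le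
  have h4 : Real.sqrt (2 * k) * Real.sqrt (2 * k) = 2 * k := Real.mul_self_sqrt (by positivity)
  -- reduce to hkey
  have hfk2 : (0:ℝ) ≤ (k ! : ℝ) * (k ! : ℝ) := by positivity
  have hpos : (0:ℝ) < (k ! : ℝ) * (k ! : ℝ) := by positivity
  rw [← mul_le_mul_iff_of_pos_right hpos]
  calc ((2 * k).choose k : ℝ) * Real.sqrt (π * k) * ((k ! : ℝ) * (k ! : ℝ))
      = ((2 * k)! : ℝ) * Real.sqrt (π * k) := by rw [← hchoose]; ring
    _ = (s (2 * k) * Real.sqrt π) * (2 * k * (4 ^ k * A ^ 2)) := by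
        rw [hf2k, hpow, h2]
        push_cast
        rw [h1]
        linear_combination (2 * s (2 * k) * Real.sqrt π * 4 ^ k * A ^ 2) * h3
    _ ≤ (s k * s k) * (2 * k * (4 ^ k * A ^ 2)) := by
        refine mul_le_mul_of_nonneg_right hkey (by positivity)
    _ = 4 ^ k * ((k ! : ℝ) * (k ! : ℝ)) := by rw [hfk]; linear_combination (-(4:ℝ) ^ k * A ^ 2 * s k * s k) * h4

lemma choose_middle_bound (N : ℕ) :
    (N.choose (N / 2) : ℝ) * Real.sqrt (π * (N + 1)) ≤ 2 ^ (N + 1) := by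
  rcases Nat.even_or_odd N with ⟨k, rfl⟩ | ⟨k, rfl⟩
  · rcases Nat.eq_zero_or_pos k with rfl | hk
    · have hπ : π ≤ 4 := pi_le_four
      simp only [Nat.zero_add, Nat.choose_self, Nat.cast_one, one_mul, pow_one,
        Nat.cast_zero, zero_add, mul_one, Nat.zero_div, Nat.choose_zero_right]
      nlinarith [Real.sq_sqrt pi_pos.le, Real.sqrt_nonneg π]
    · have hb := central_binom_bound k hk
      have h2 : (k + k) / 2 = k := by omega
      rw [h2]
      have hkR : (1:ℝ) ≤ k := by exact_mod_cast hk
      have h4sq : ∀ x : ℝ, Real.sqrt (2^2 * x) = 2 * Real.sqrt x := fun x => by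
        rw [Real.sqrt_mul (by positivity : (0:ℝ) ≤ 2^2) x,
          Real.sqrt_sq (by norm_num : (0:ℝ) ≤ 2)]
      have hsq : Real.sqrt (π * ((k:ℝ) + k + 1)) ≤ 2 * Real.sqrt (π * k) := by
        rw [← h4sq (π * k)]
        apply Real.sqrt_le_sqrt
        nlinarith [pi_pos]
      have hp : (2:ℝ) ^ (k + k + 1) = 2 * 4 ^ k := by
        rw [show k + k + 1 = 2 * k + 1 by ring, pow_succ, pow_mul]
        norm_num [mul_comm]
      rw [show (2 * k) = k + k by ring] at hb
      push_cast
      calc ((k + k).choose k : ℝ) * Real.sqrt (π * ((k:ℝ) + k + 1))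
          ≤ ((k + k).choose k : ℝ) * (2 * Real.sqrt (π * k)) :=
            mul_le_mul_of_nonneg_left hsq (Nat.cast_nonneg _)
        _ = 2 * (((k + k).choose k : ℝ) * Real.sqrt (π * k)) := by ring
        _ ≤ 2 * 4 ^ k := by linarith
        _ = 2 ^ (k + k + 1) := hp.symm
  · have hdiv : (2 * k + 1) / 2 = k := by omega
    rw [hdiv]
    have hsymm : (2 * k + 1).choose (k + 1) = (2 * k + 1).choose k := by
      have h := Nat.choose_symm (show k + 1 ≤ 2 * k + 1 by omega)
      rw [show 2 * k + 1 - (k + 1) = k by omega] at h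
      exact h.symm
    have hpascal : (2 * k + 2).choose (k + 1) = 2 * ((2 * k + 1).choose k) := by
      rw [show 2 * k + 2 = (2 * k + 1) + 1 by ring, Nat.choose_succ_succ, hsymm]
      omega
    have hb := central_binom_bound (k + 1) (by omega)
    rw [show 2 * (k + 1) = 2 * k + 2 by ring, hpascal] at hb
    push_cast at hb
    have h4sq : ∀ x : ℝ, Real.sqrt (2^2 * x) = 2 * Real.sqrt x := fun x => by
      rw [Real.sqrt_mul (by positivity : (0:ℝ) ≤ 2^2) x,
        Real.sqrt_sq (by norm_num : (0:ℝ) ≤ 2)]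
    have hsq : Real.sqrt (π * (2 * (k:ℝ) + 1 + 1)) ≤ 2 * Real.sqrt (π * ((k:ℝ) + 1)) := by
      rw [← h4sq (π * ((k:ℝ) + 1))]
      apply Real.sqrt_le_sqrt
      nlinarith [pi_pos, Nat.cast_nonneg (α := ℝ) k]
    have hp : (2:ℝ) ^ (2 * k + 1 + 1) = 4 ^ (k + 1) := by
      rw [show 2 * k + 1 + 1 = 2 * (k + 1) by ring, pow_mul]
      norm_num
    push_cast
    calc ((2 * k + 1).choose k : ℝ) * Real.sqrt (π * (2 * (k:ℝ) + 1 + 1))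
        ≤ ((2 * k + 1).choose k : ℝ) * (2 * Real.sqrt (π * ((k:ℝ) + 1))) :=
          mul_le_mul_of_nonneg_left hsq (Nat.cast_nonneg _)
      _ = (2 * ((2 * k + 1).choose k : ℝ)) * Real.sqrt (π * ((k:ℝ) + 1)) := by ring
      _ ≤ 4 ^ (k + 1) := by convert hb using 2 <;> push_cast <;> ring
      _ = 2 ^ (2 * k + 1 + 1) := hp.symm

theorem nc_multiplicity_upper_bound (n i : ℕ) (hn : Even n)
    (hi1 : 1 ≤ i) (hi2 : i ≤ n / 2) :
    (Nat.choose (n - i - 1) (n / 2 - 1) : ℝ) - Nat.choose (n - i - 1) (n / 2)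
      ≤ 2 ^ (n - i + 1) * (n : ℝ) ^ (-(3 / 2) : ℝ) * i * Real.sqrt (2 / Real.pi) := by
  obtain ⟨m, rfl⟩ := hn
  have hm2 : (m + m) / 2 = m := by omega
  rw [hm2] at hi2 ⊢
  have hm1 : 1 ≤ m := le_trans hi1 hi2
  set N := m + m - i - 1 with hN
  have hNi : m + m - i + 1 = N + 2 := by omega
  have hmle : m ≤ N + 1 := by omega
  have hchoose_id : N.choose m * m = N.choose (m - 1) * (m - i) := by
    have h := Nat.choose_succ_right_eq N (m - 1)
    rwa [show m - 1 + 1 = m by omega, show N - (m - 1) = m - i by omega] at h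
  have hmR : (0:ℝ) < m := by exact_mod_cast hm1
  have hiR : (0:ℝ) < i := by exact_mod_cast hi1
  have h := congrArg (Nat.cast (R := ℝ)) hchoose_id
  push_cast [Nat.cast_sub hi2] at h
  have heq : (N.choose (m - 1) : ℝ) - N.choose m = (N.choose (m - 1) : ℝ) * i / m := by
    field_simp
    linear_combination -h
  rw [heq, hNi]
  have hmid : (N.choose (m - 1) : ℝ) ≤ N.choose (N / 2) := by
    exact_mod_cast Nat.choose_le_middle (m - 1) N
  have hsqm_pos : (0:ℝ) < Real.sqrt (π * m) := Real.sqrt_pos.mpr (by positivity)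
  have hbound : (N.choose (m - 1) : ℝ) * Real.sqrt (π * m) ≤ 2 ^ (N + 1) := by
    have hsq2 : Real.sqrt (π * m) ≤ Real.sqrt (π * (N + 1)) := by
      apply Real.sqrt_le_sqrt
      have hm' : (m:ℝ) ≤ (N:ℝ) + 1 := by exact_mod_cast hmle
      nlinarith [pi_pos]
    calc (N.choose (m - 1) : ℝ) * Real.sqrt (π * m)
        ≤ (N.choose (N / 2) : ℝ) * Real.sqrt (π * (N + 1)) :=
          mul_le_mul hmid hsq2 hsqm_pos.le (Nat.cast_nonneg _)
      _ ≤ 2 ^ (N + 1) := choose_middle_bound N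
  have hcast : ((m + m : ℕ) : ℝ) = 2 * m := by push_cast; ring
  have e1 : ((2:ℝ) * m) ^ (-(3 / 2) : ℝ) = ((2 * (m:ℝ)) * Real.sqrt (2 * m))⁻¹ := by
    rw [Real.rpow_neg (by positivity), show (3:ℝ)/2 = 1 + 1/2 by norm_num,
      Real.rpow_add (by positivity), Real.rpow_one, ← Real.sqrt_eq_rpow]
  have hs2 : Real.sqrt (2 * (m:ℝ)) = Real.sqrt 2 * Real.sqrt m :=
    Real.sqrt_mul (by norm_num) _
  have hsp : Real.sqrt (π * (m:ℝ)) = Real.sqrt π * Real.sqrt m := Real.sqrt_mul pi_pos.le _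
  rw [hcast, e1, hs2, show Real.sqrt (2 / π) = Real.sqrt 2 / Real.sqrt π from
    Real.sqrt_div (by norm_num) π]
  have hfinal : (2:ℝ) ^ (N + 2) * ((2 * (m:ℝ)) * (Real.sqrt 2 * Real.sqrt m))⁻¹ * i *
      (Real.sqrt 2 / Real.sqrt π) = 2 ^ (N + 1) * i / ((m:ℝ) * Real.sqrt (π * m)) := by
    have ha : Real.sqrt 2 ≠ 0 := by positivity
    have hb' : (Real.sqrt (m:ℝ)) ≠ 0 := by positivity
    have hc : Real.sqrt π ≠ 0 := by positivity
    rw [hsp]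
    field_simp
    ring
  rw [hfinal, div_le_div_iff₀ hmR (by positivity)]
  nlinarith [mul_le_mul_of_nonneg_right hbound (show (0:ℝ) ≤ (i:ℝ) * m by positivity),
    hsqm_pos, hiR, hmR]
end

section
/- Suppose for each m ≥ 1 we have finitely many weight classes with weights W_{m,i} = ν(i)·ω(m) (for i up to the number of classes) and multiplicities M_{m,i}, where ν is positive increasing, ω > 0, and M_{m,1} ≥ (1/2)·e^{F(1)·G(m)}/h(1) for m large, with F(1) > 0, h(1) > 0, and G(m) → ∞. Then for every t with 0 ≤ t < F(1)/ν(1), the product ∏_i (1 - e^{-ν(i)·t·G(m)})^{M_{m,i}} tends to 0 as m → ∞. -/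
open Filter

/-- Key step of the main theorem: `Ψ_m(t) → 1` below the threshold, i.e. the
product tends to `0`. -/
theorem product_tendsto_zero_below_threshold
    (ν ω G : ℕ → ℝ) (M : ℕ → ℕ → ℕ) (N : ℕ → ℕ) (F1 h1 : ℝ)
    (hν : ∀ i, 0 < ν i) (hmono : Monotone ν) (hω : ∀ m, 0 < ω m)
    (hN : ∀ m, 1 ≤ N m) (hF : 0 < F1) (hh : 0 < h1)
    (hG : Tendsto G atTop atTop)
    (hM1 : ∀ᶠ m in atTop, 1 / 2 * Real.exp (F1 * G m) / h1 ≤ (M m 1 : ℝ)) :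
    ∀ t : ℝ, 0 ≤ t → t < F1 / ν 1 →
      Tendsto (fun m => ∏ i ∈ Finset.Icc 1 (N m),
          (1 - Real.exp (-(ν i) * t * G m)) ^ (M m i))
        atTop (nhds 0) := by
  intro t ht htlt
  have hν1 := hν 1
  have hc : 0 < F1 - ν 1 * t := by
    have := (lt_div_iff₀ hν1).mp htlt
    nlinarith
  -- the dominating sequence
  set g : ℕ → ℝ := fun m =>
    Real.exp (-(1 / 2 * Real.exp (F1 * G m) / h1 * Real.exp (-(ν 1) * t * G m)))
    with hgdef
  have hg : Tendsto g atTop (nhds 0) := by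
    have h1' : Tendsto (fun m => (F1 - ν 1 * t) * G m) atTop atTop :=
      hG.const_mul_atTop hc
    have h2 : Tendsto (fun m => Real.exp ((F1 - ν 1 * t) * G m)) atTop atTop :=
      Real.tendsto_exp_atTop.comp h1'
    have h3 : Tendsto (fun m => 1 / (2 * h1) * Real.exp ((F1 - ν 1 * t) * G m))
        atTop atTop := by
      apply h2.const_mul_atTop
      positivity
    have h4 : Tendsto (fun m => -(1 / (2 * h1) * Real.exp ((F1 - ν 1 * t) * G m)))
        atTop atBot := tendsto_neg_atTop_atBot.comp h3
    have h5 := Real.tendsto_exp_atBot.comp h4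
    refine h5.congr (fun m => ?_)
    simp only [Function.comp, hgdef]
    congr 1
    rw [show (F1 - ν 1 * t) * G m = F1 * G m + -(ν 1) * t * G m by ring,
      Real.exp_add]
    field_simp
  apply squeeze_zero' (g := g)
  · filter_upwards [hG.eventually_ge_atTop 1] with m hGm
    apply Finset.prod_nonneg
    intro i _
    apply pow_nonneg
    have : -(ν i) * t * G m ≤ 0 := by
      nlinarith [mul_nonneg (mul_nonneg (hν i).le ht) (le_trans zero_le_one hGm)]
    have := Real.exp_le_one_iff.mpr this
    linarith
  · filter_upwards [hM1, hG.eventually_ge_atTop 1] with m hM1m hGm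
    have hGpos : (0:ℝ) < G m := lt_of_lt_of_le one_pos hGm
    set x := Real.exp (-(ν 1) * t * G m) with hxdef
    have hx0 : 0 < x := Real.exp_pos _
    have hx1 : x ≤ 1 := by
      apply Real.exp_le_one_iff.mpr
      nlinarith [mul_nonneg (mul_nonneg (hν 1).le ht) hGpos.le]
    have h1mem : 1 ∈ Finset.Icc 1 (N m) := by
      simp [hN m]
    -- step 1: product ≤ first factor
    have step1 : (∏ i ∈ Finset.Icc 1 (N m),
        (1 - Real.exp (-(ν i) * t * G m)) ^ (M m i)) ≤ (1 - x) ^ (M m 1) := by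
      rw [← Finset.mul_prod_erase _ _ h1mem]
      have hrest : (∏ i ∈ (Finset.Icc 1 (N m)).erase 1,
          (1 - Real.exp (-(ν i) * t * G m)) ^ (M m i)) ≤ 1 := by
        apply Finset.prod_le_one
        · intro i _
          apply pow_nonneg
          have : -(ν i) * t * G m ≤ 0 := by
            nlinarith [mul_nonneg (mul_nonneg (hν i).le ht) hGpos.le]
          have := Real.exp_le_one_iff.mpr this
          linarith
        · intro i _
          apply pow_le_one₀
          · have : -(ν i) * t * G m ≤ 0 := by
              nlinarith [mul_nonneg (mul_nonneg (hν i).le ht) hGpos.le]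
            have := Real.exp_le_one_iff.mpr this
            linarith
          · have := Real.exp_pos (-(ν i) * t * G m)
            linarith
      have hfst : 0 ≤ (1 - x) ^ (M m 1) := pow_nonneg (by linarith) _
      calc (1 - x) ^ (M m 1) * (∏ i ∈ (Finset.Icc 1 (N m)).erase 1,
              (1 - Real.exp (-(ν i) * t * G m)) ^ (M m i))
          ≤ (1 - x) ^ (M m 1) * 1 := by
            apply mul_le_mul_of_nonneg_left hrest hfst
        _ = (1 - x) ^ (M m 1) := mul_one _
    -- step 2: (1-x)^n ≤ exp(-n x)
    have step2 : (1 - x) ^ (M m 1) ≤ Real.exp (-((M m 1 : ℝ) * x)) := by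
      have hbase : 1 - x ≤ Real.exp (-x) := by
        have := Real.add_one_le_exp (-x)
        linarith
      calc (1 - x) ^ (M m 1) ≤ (Real.exp (-x)) ^ (M m 1) :=
            pow_le_pow_left₀ (by linarith) hbase _
        _ = Real.exp ((M m 1 : ℝ) * (-x)) := by
            rw [← Real.exp_nat_mul]
        _ = Real.exp (-((M m 1 : ℝ) * x)) := by ring_nf
    -- step 3: exp(-n x) ≤ g m
    have step3 : Real.exp (-((M m 1 : ℝ) * x)) ≤ g m := by
      rw [hgdef]
      apply Real.exp_le_exp.mpr
      have : 1 / 2 * Real.exp (F1 * G m) / h1 * x ≤ (M m 1 : ℝ) * x :=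
        mul_le_mul_of_nonneg_right hM1m hx0.le
      linarith
    linarith [step1, step2, step3]
  · exact hg
end
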